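/- Let L be a graded Lie algebra of maximal class over a field F, and let y ∈ L_1 be a nonzero element with ⁅u, y⁆ = 0 for all u ∈ L_2. Then ⁅⁅a, y⁆, y⁆ = 0 for every a ∈ L; that is, (ad y)² = 0, so y is a sandwich element of L. -/

import Mathlib

/-- `Lc` is a grading of `L` (indexed by `ℕ`, with trivial component in degree `0`)
making `L` an (infinite-dimensional) graded Lie algebra of maximal class. -/
structure IsMaxClassGrading (F : Type*) [Field F] (L : Type*) [LieRing L] [LieAlgebra F L]
    (Lc : ℕ → Submodule F L) : Prop where
  zero : Lc 0 = ⊥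
  internal : DirectSum.IsInternal Lc
  bracket_mem : ∀ i j : ℕ, ∀ u ∈ Lc i, ∀ w ∈ Lc j, ⁅u, w⁆ ∈ Lc (i + j)
  dim_one : Module.finrank F (Lc 1) = 2
  dim_rest : ∀ i : ℕ, 2 ≤ i → Module.finrank F (Lc i) = 1
  gen : ∀ i : ℕ, 1 ≤ i →
    Lc (i + 1) = Submodule.span F {z | ∃ u ∈ Lc i, ∃ w ∈ Lc 1, z = ⁅u, w⁆}

/-- In a one-dimensional submodule, any element is a multiple of a given nonzero element. -/
lemma span_of_dim_one {F : Type*} [Field F] {L : Type*} [AddCommGroup L] [Module F L]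
    {N : Submodule F L} (hN : Module.finrank F N = 1) {v : L} (hv : v ∈ N) (hv0 : v ≠ 0)
    {w : L} (hw : w ∈ N) : ∃ c : F, w = c • v := by
  have hv0' : (⟨v, hv⟩ : N) ≠ 0 := by
    simp only [ne_eq, Submodule.mk_eq_zero]; exact hv0
  obtain ⟨c, hc⟩ := (finrank_eq_one_iff_of_nonzero' (⟨v, hv⟩ : N) hv0').mp hN ⟨w, hw⟩
  exact ⟨c, by simpa using congrArg Subtype.val hc.symm⟩

/-- A submodule of positive finrank contains a nonzero element. -/
lemma exists_ne_zero_of_finrank_pos {F : Type*} [Field F] {L : Type*} [AddCommGroup L]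
    [Module F L] {N : Submodule F L} (hN : 0 < Module.finrank F N) :
    ∃ v ∈ N, v ≠ 0 := by
  have : Nontrivial N := Module.nontrivial_of_finrank_pos hN
  obtain ⟨v, hv⟩ := exists_ne (0 : N)
  exact ⟨v, v.2, fun h => hv (Subtype.ext h)⟩

/-- If `y ∈ L_1` is nonzero and centralizes `L_2` in a graded Lie algebra of maximal
class, then `(ad y)² = 0`: `y` is a sandwich element. -/
theorem sandwich {F : Type*} [Field F] {L : Type*} [LieRing L] [LieAlgebra F L]
    (Lc : ℕ → Submodule F L) (hL : IsMaxClassGrading F L Lc)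
    (y : L) (hy : y ∈ Lc 1) (hy0 : y ≠ 0) (hyc : ∀ u ∈ Lc 2, ⁅u, y⁆ = 0) :
    ∀ a : L, ⁅⁅a, y⁆, y⁆ = 0 := by
  classical
  -- Choose `x` so that `{x, y}` spans `Lc 1`.
  obtain ⟨x, hx1, hxy⟩ : ∃ x ∈ Lc 1, ∀ w ∈ Lc 1, ∃ a b : F, w = a • x + b • y := by
    haveI : FiniteDimensional F (Lc 1) := .of_finrank_pos (by rw [hL.dim_one]; norm_num)
    set y' : Lc 1 := ⟨y, hy⟩ with hy'
    have hy'0 : y' ≠ 0 := by simp only [hy', ne_eq, Submodule.mk_eq_zero]; exact hy0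
    have hne : Submodule.span F ({y'} : Set (Lc 1)) ≠ ⊤ := by
      intro h
      have h1 : Module.finrank F (Submodule.span F ({y'} : Set (Lc 1))) = 1 :=
        finrank_span_singleton hy'0
      rw [h, finrank_top, hL.dim_one] at h1
      norm_num at h1
    obtain ⟨x', hx'⟩ : ∃ x' : Lc 1, x' ∉ Submodule.span F ({y'} : Set (Lc 1)) := by
      by_contra h
      push_neg at h
      exact hne (Submodule.eq_top_iff'.mpr h)
    have hlt : Submodule.span F ({y'} : Set (Lc 1)) <
        Submodule.span F ({x', y'} : Set (Lc 1)) := by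
      refine lt_of_le_of_ne (Submodule.span_mono (by simp)) ?_
      intro h
      exact hx' (h ▸ Submodule.subset_span (by simp))
    have h2 : Module.finrank F (Submodule.span F ({x', y'} : Set (Lc 1))) = 2 := by
      have hgt : 1 < Module.finrank F (Submodule.span F ({x', y'} : Set (Lc 1))) := by
        have := Submodule.finrank_lt_finrank_of_lt hlt
        rwa [finrank_span_singleton hy'0] at this
      have hle : Module.finrank F (Submodule.span F ({x', y'} : Set (Lc 1))) ≤ 2 := by
        have := Submodule.finrank_le (Submodule.span F ({x', y'} : Set (Lc 1)))
        rwa [hL.dim_one] at this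
      omega
    have htop : Submodule.span F ({x', y'} : Set (Lc 1)) = ⊤ :=
      Submodule.eq_top_of_finrank_eq (by rw [h2, hL.dim_one])
    refine ⟨(x' : L), x'.2, fun w hw => ?_⟩
    have : (⟨w, hw⟩ : Lc 1) ∈ Submodule.span F ({x', y'} : Set (Lc 1)) := by
      rw [htop]; trivial
    obtain ⟨a, b, hab⟩ := Submodule.mem_span_pair.mp this
    refine ⟨a, b, ?_⟩
    have := congrArg Subtype.val hab
    simpa [hy'] using this.symm
  -- `e₂ = ⁅x, y⁆ ∈ Lc 2`.
  have he2 : (⁅x, y⁆ : L) ∈ Lc 2 := hL.bracket_mem 1 1 x hx1 y hy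
  -- the key alternative: for every `n`, `y` centralizes `Lc (n+2)` or `Lc (n+3)`.
  have key : ∀ n : ℕ, (∀ u ∈ Lc (n + 2), ⁅u, y⁆ = 0) ∨ (∀ u ∈ Lc (n + 3), ⁅u, y⁆ = 0) := by
    intro n
    induction n with
    | zero => exact Or.inl hyc
    | succ n ih =>
      by_cases h3 : ∀ u ∈ Lc (n + 3), ⁅u, y⁆ = 0
      · exact Or.inl h3
      · right
        have hZ : ∀ u ∈ Lc (n + 2), ⁅u, y⁆ = 0 := ih.resolve_right h3
        -- pick nonzero `v` spanning `Lc (n+2)`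
        obtain ⟨v, hv, hv0⟩ := exists_ne_zero_of_finrank_pos
          (N := Lc (n + 2)) (by rw [hL.dim_rest (n + 2) (by omega)]; norm_num)
        have hvy : (⁅v, y⁆ : L) = 0 := hZ v hv
        -- `e = ⁅v, x⁆` spans `Lc (n+3)`
        have he : (⁅v, x⁆ : L) ∈ Lc (n + 3) := hL.bracket_mem (n + 2) 1 v hv x hx1
        have hespan : ∀ u ∈ Lc (n + 3), ∃ c : F, u = c • ⁅v, x⁆ := by
          intro u hu
          rw [hL.gen (n + 2) (by omega)] at hu
          have hsub : {z | ∃ u' ∈ Lc (n + 2), ∃ w ∈ Lc 1, z = ⁅u', w⁆} ⊆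
              (Submodule.span F ({⁅v, x⁆} : Set L) : Set L) := by
            rintro z ⟨u', hu', w, hw, rfl⟩
            obtain ⟨c, rfl⟩ := span_of_dim_one (hL.dim_rest (n + 2) (by omega)) hv hv0 hu'
            obtain ⟨a, b, rfl⟩ := hxy w hw
            have : (⁅c • v, a • x + b • y⁆ : L) = (c * a) • ⁅v, x⁆ := by
              rw [lie_add, smul_lie, smul_lie, lie_smul, lie_smul, hvy]
              rw [smul_zero, smul_zero, add_zero, smul_smul]
            rw [this]
            exact Submodule.smul_mem _ _ (Submodule.subset_span rfl)
          have := (Submodule.span_le.mpr hsub) hu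
          exact (Submodule.mem_span_singleton.mp this).imp fun c hc => hc.symm
        -- `⁅e, y⁆ ≠ 0`
        have hey0 : (⁅⁅v, x⁆, y⁆ : L) ≠ 0 := by
          intro h0
          apply h3
          intro u hu
          obtain ⟨c, rfl⟩ := hespan u hu
          rw [smul_lie, h0, smul_zero]
        -- `f = ⁅e, y⁆ = ⁅v, ⁅x, y⁆⁆`, and `⁅f, y⁆ = 0`
        have hf : (⁅⁅v, x⁆, y⁆ : L) = ⁅v, ⁅x, y⁆⁆ := by
          rw [lie_lie, hvy, lie_zero, sub_zero]
        have hfy : (⁅⁅⁅v, x⁆, y⁆, y⁆ : L) = 0 := by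
          rw [hf, lie_lie, hyc _ he2, lie_zero, hvy, lie_zero, sub_zero]
        have hfmem : (⁅⁅v, x⁆, y⁆ : L) ∈ Lc (n + 4) := by
          have := hL.bracket_mem (n + 3) 1 _ he y hy
          exact this
        intro u hu
        obtain ⟨c, rfl⟩ := span_of_dim_one (hL.dim_rest (n + 4) (by omega)) hfmem hey0 hu
        rw [smul_lie, hfy, smul_zero]
  -- the conclusion holds on each homogeneous component
  have comp : ∀ n : ℕ, ∀ u ∈ Lc n, ⁅⁅u, y⁆, y⁆ = 0 := by
    intro n u hu
    match n with
    | 0 =>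
      rw [hL.zero] at hu
      simp only [Submodule.mem_bot] at hu
      rw [hu, zero_lie, zero_lie]
    | 1 =>
      have : (⁅u, y⁆ : L) ∈ Lc 2 := hL.bracket_mem 1 1 u hu y hy
      simp [hyc _ this]
    | (n + 2) =>
      rcases key n with h | h
      · simp [h u hu]
      · have : (⁅u, y⁆ : L) ∈ Lc (n + 3) := hL.bracket_mem (n + 2) 1 u hu y hy
        simp [h _ this]
  -- extend to all of `L` by the internal grading
  intro a
  have ha : a ∈ ⨆ n, Lc n := by
    rw [hL.internal.submodule_iSup_eq_top]; trivial
  refine Submodule.iSup_induction (motive := fun a => ⁅⁅a, y⁆, y⁆ = 0) Lc ha comp ?_ ?_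
  · show ⁅⁅(0:L), y⁆, y⁆ = 0
    simp
  · intro b c hb hc
    rw [add_lie, add_lie, hb, hc, add_zero]
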